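/- Let μ > ν ≥ 0. Then Σ_{k=0}^{∞} max{ν^k/(ν+1)^{k+1} − μ^k/(μ+1)^{k+1}, 0} = max over integers N ≥ 1 of ((μ/(μ+1))^N − (ν/(ν+1))^N). -/

import Mathlib

/-- For `μ > ν ≥ 0`, the half total variation distance
`Σ_k max{ν^k/(ν+1)^{k+1} − μ^k/(μ+1)^{k+1}, 0}` is the maximum over integers `N ≥ 1`
of `(μ/(μ+1))^N − (ν/(ν+1))^N`. -/
theorem stmt_5 (ν μ : ℝ) (hν : 0 ≤ ν) (hμν : ν < μ) :
    IsGreatest ((fun N : ℕ => (μ / (μ + 1)) ^ N - (ν / (ν + 1)) ^ N) '' {N : ℕ | 1 ≤ N})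
      (∑' k : ℕ, max (ν ^ k / (ν + 1) ^ (k + 1) - μ ^ k / (μ + 1) ^ (k + 1)) 0) := by
  have hμ : 0 < μ := lt_of_le_of_lt hν hμν
  have hν1 : (0:ℝ) < ν + 1 := by linarith
  have hμ1 : (0:ℝ) < μ + 1 := by linarith
  set a := μ / (μ + 1) with ha
  set b := ν / (ν + 1) with hb
  have hb0 : 0 ≤ b := div_nonneg hν hν1.le
  have hba : b < a := by
    rw [ha, hb, div_lt_div_iff₀ hν1 hμ1]; nlinarith
  have ha1 : a < 1 := by rw [ha, div_lt_one hμ1]; linarith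
  have hb1 : b < 1 := hba.trans ha1
  have ha0 : 0 < a := lt_of_le_of_lt hb0 hba
  have hp : ∀ k : ℕ, ν ^ k / (ν + 1) ^ (k + 1) = b ^ k * (1 - b) := by
    intro k
    rw [hb, div_pow, pow_succ]
    field_simp
    ring
  have hq : ∀ k : ℕ, μ ^ k / (μ + 1) ^ (k + 1) = a ^ k * (1 - a) := by
    intro k
    rw [ha, div_pow, pow_succ]
    field_simp
    ring
  have hfun : (fun k : ℕ => max (ν ^ k / (ν + 1) ^ (k + 1) - μ ^ k / (μ + 1) ^ (k + 1)) 0)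
      = fun k : ℕ => max (b ^ k * (1 - b) - a ^ k * (1 - a)) 0 := by
    funext k; rw [hp, hq]
  rw [hfun]
  -- summability
  have hsum : Summable (fun k : ℕ => max (b ^ k * (1 - b) - a ^ k * (1 - a)) 0) := by
    apply Summable.of_nonneg_of_le (fun k => le_max_right _ _)
      (fun k => ?_) ((summable_geometric_of_lt_one hb0 hb1).mul_right (1 - b))
    exact max_le (by nlinarith [pow_nonneg ha0.le k, pow_nonneg hb0 k]) (mul_nonneg (pow_nonneg hb0 k) (by linarith))
  -- threshold
  have hex : ∃ k : ℕ, b ^ k * (1 - b) < a ^ k * (1 - a) := by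
    obtain ⟨k, hk⟩ := exists_pow_lt_of_lt_one
      (div_pos (by linarith : (0:ℝ) < 1 - a) (by linarith : (0:ℝ) < 1 - b))
      (by rw [div_lt_one ha0]; exact hba)
    refine ⟨k, ?_⟩
    have h1 : (b / a) ^ k * a ^ k = b ^ k := by
      rw [div_pow, div_mul_cancel₀]; positivity
    have h2 : (b / a) ^ k * ((1 - b) * a ^ k) < (1 - a) / (1 - b) * ((1 - b) * a ^ k) := by
      apply mul_lt_mul_of_pos_right hk
      exact mul_pos (by linarith) (pow_pos ha0 k)
    calc b ^ k * (1 - b) = (b / a) ^ k * ((1 - b) * a ^ k) := by rw [← h1]; ring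
      _ < (1 - a) / (1 - b) * ((1 - b) * a ^ k) := h2
      _ = a ^ k * (1 - a) := by
        have hb' : (1:ℝ) - b ≠ 0 := by linarith
        field_simp
  set M := Nat.find hex with hM
  have hM1 : 1 ≤ M := by
    rcases Nat.eq_zero_or_pos M with h | h
    · exfalso
      have := Nat.find_spec hex
      rw [← hM, h] at this
      simp only [pow_zero, one_mul] at this
      linarith
    · exact h
  have hlt : ∀ k < M, a ^ k * (1 - a) ≤ b ^ k * (1 - b) := fun k hk =>
    not_lt.mp (Nat.find_min hex hk)
  have hge : ∀ k, M ≤ k → b ^ k * (1 - b) < a ^ k * (1 - a) := by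
    intro k hk
    induction k, hk using Nat.le_induction with
    | base => exact Nat.find_spec hex
    | succ n hn ih =>
        have h1 : b ^ (n + 1) * (1 - b) = b * (b ^ n * (1 - b)) := by ring
        have h2 : a ^ (n + 1) * (1 - a) = a * (a ^ n * (1 - a)) := by ring
        rw [h1, h2]
        have hbn : b ^ n * (1 - b) ≥ 0 := mul_nonneg (pow_nonneg hb0 n) (by linarith)
        calc b * (b ^ n * (1 - b)) ≤ a * (b ^ n * (1 - b)) :=
              mul_le_mul_of_nonneg_right hba.le hbn
          _ < a * (a ^ n * (1 - a)) := by exact mul_lt_mul_of_pos_left ih ha0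
  -- tsum equals finite sum
  have hzero : ∀ k ∉ Finset.range M, max (b ^ k * (1 - b) - a ^ k * (1 - a)) 0 = 0 := by
    intro k hk
    rw [Finset.mem_range, not_lt] at hk
    exact max_eq_right (by linarith [hge k hk])
  have htele : ∀ (c : ℝ) (n : ℕ), ∑ k ∈ Finset.range n, c ^ k * (1 - c) = 1 - c ^ n := by
    intro c n
    have : ∀ k : ℕ, c ^ k * (1 - c) = c ^ k - c ^ (k + 1) := by intro k; ring
    simp_rw [this]
    rw [Finset.sum_range_sub' (fun k => c ^ k)]
    simp
  have key : (∑' k : ℕ, max (b ^ k * (1 - b) - a ^ k * (1 - a)) 0) = a ^ M - b ^ M := by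
    rw [tsum_eq_sum hzero]
    have : ∀ k ∈ Finset.range M, max (b ^ k * (1 - b) - a ^ k * (1 - a)) 0
        = b ^ k * (1 - b) - a ^ k * (1 - a) := by
      intro k hk
      rw [Finset.mem_range] at hk
      exact max_eq_left (by linarith [hlt k hk])
    rw [Finset.sum_congr rfl this, Finset.sum_sub_distrib, htele, htele]
    ring
  constructor
  · exact ⟨M, hM1, key.symm⟩
  · rintro x ⟨N, hN, rfl⟩
    show a ^ N - b ^ N ≤ _
    have hNsum : a ^ N - b ^ N
        = ∑ k ∈ Finset.range N, (b ^ k * (1 - b) - a ^ k * (1 - a)) := by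
      rw [Finset.sum_sub_distrib, htele, htele]; ring
    rw [hNsum]
    calc ∑ k ∈ Finset.range N, (b ^ k * (1 - b) - a ^ k * (1 - a))
        ≤ ∑ k ∈ Finset.range N, max (b ^ k * (1 - b) - a ^ k * (1 - a)) 0 :=
          Finset.sum_le_sum (fun k _ => le_max_left _ _)
      _ ≤ ∑' k : ℕ, max (b ^ k * (1 - b) - a ^ k * (1 - a)) 0 :=
          hsum.sum_le_tsum _ (fun k _ => le_max_right _ _)
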